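/- Let k ≥ 3 and let G be a k-uniform path block graph with clique sequence C1, …, Cq. Let u ∈ Cq be a vertex that is not a cut-vertex of G, and let c, d be integers with c ≥ 1 and d ≥ 0 such that either c > k − 1 ≥ d, or c = d = k − 1. Then there exists a proper ℓ-orientation of G compensated by (c, d, u), where ℓ = max{c, 2k − 2}. -/

import Mathlib

open SimpleGraph

structure Orient {V : Type*} (G : SimpleGraph V) where
  dir : V → V → Bool
  adj_of_dir : ∀ u v, dir u v = true → G.Adj u v
  dir_iff : ∀ u v, G.Adj u v → (dir u v = true ↔ ¬ dir v u = true)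

def Orient.inDeg {V : Type*} [Fintype V] {G : SimpleGraph V} (D : Orient G) (v : V) : ℕ :=
  (Finset.univ.filter (fun u => D.dir u v = true)).card

/-- `v` is a cut-vertex of `G` if its removal increases the number of connected components. -/
def IsCutVertex {V : Type*} (G : SimpleGraph V) (v : V) : Prop :=
  Nat.card (G.induce {u | u ≠ v}).ConnectedComponent > Nat.card G.ConnectedComponent

/-- `C 0, …, C (q-1)` is the clique sequence of a `k`-uniform path block graph `G`:
the cliques all have `k` vertices, they cover the vertices and edges of `G`,
consecutive cliques share exactly one vertex, non-consecutive cliques are disjoint,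
and consecutive shared (cut-)vertices are distinct. -/
structure IsPathBlockSeq {V : Type*} [DecidableEq V] (G : SimpleGraph V) (k : ℕ)
    {q : ℕ} (C : Fin q → Finset V) : Prop where
  card_eq : ∀ i, (C i).card = k
  clique : ∀ i, G.IsClique (C i)
  cover : ∀ v : V, ∃ i, v ∈ C i
  edge_mem : ∀ u v, G.Adj u v → ∃ i, u ∈ C i ∧ v ∈ C i
  consec : ∀ i j : Fin q, (j : ℕ) = (i : ℕ) + 1 → (C i ∩ C j).card = 1
  apart : ∀ i j : Fin q, (i : ℕ) + 1 < (j : ℕ) → C i ∩ C j = ∅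
  cut_distinct : ∀ i j l : Fin q, (j : ℕ) = (i : ℕ) + 1 → (l : ℕ) = (j : ℕ) + 1 →
    C i ∩ C j ≠ C j ∩ C l

/-- `D` is a proper orientation of `G` compensated by `(c, d, u)`: the indegree of `u`
is `d`, and the colouring assigning `c` to `u` and its indegree to every other vertex
is a proper colouring of `G`. -/
def Orient.CompensatedProper {V : Type*} [Fintype V] [DecidableEq V] {G : SimpleGraph V}
    (D : Orient G) (c d : ℕ) (u : V) : Prop :=
  D.inDeg u = d ∧ ∀ x y, G.Adj x y →
    (if x = u then c else D.inDeg x) ≠ (if y = u then c else D.inDeg y)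


lemma rank_exists {V : Type*} [DecidableEq V] (k : ℕ) (S : Finset V) (hS : S.card = k)
    (v w : V) (hv : v ∈ S) (hw : w ∈ S) (hvw : v ≠ w)
    (a b : ℕ) (ha : a < k) (hb : b < k) (hab : a ≠ b) :
    ∃ f : V → ℕ, Set.InjOn f ↑S ∧ (∀ x ∈ S, f x < k) ∧ f v = a ∧ f w = b := by
  have hcard : Fintype.card {x // x ∈ S} = k := by simpa using hS
  let e : {x // x ∈ S} ≃ Fin k := Fintype.equivFinOfCardEq hcard
  let a' : Fin k := ⟨a, ha⟩
  let b' : Fin k := ⟨b, hb⟩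
  let e₂ : {x // x ∈ S} ≃ Fin k := e.trans (Equiv.swap (e ⟨v, hv⟩) a')
  let e₃ : {x // x ∈ S} ≃ Fin k := e₂.trans (Equiv.swap (e₂ ⟨w, hw⟩) b')
  have h2v : e₂ ⟨v, hv⟩ = a' := by simp [e₂]
  have hne : e₂ ⟨w, hw⟩ ≠ a' := by
    rw [← h2v]
    intro h
    exact hvw (Subtype.ext_iff.mp (e₂.injective h)).symm
  have h3v : e₃ ⟨v, hv⟩ = a' := by
    simp only [e₃, Equiv.trans_apply, h2v]
    exact Equiv.swap_apply_of_ne_of_ne (Ne.symm hne) (fun h => hab (congrArg Fin.val h))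
  have h3w : e₃ ⟨w, hw⟩ = b' := by simp [e₃]
  refine ⟨fun x => if h : x ∈ S then (e₃ ⟨x, h⟩ : ℕ) else 0, ?_, ?_, ?_, ?_⟩
  · intro x hx y hy hxy
    simp only [Finset.coe_sort_coe, Finset.mem_coe] at hx hy
    simp only [dif_pos hx, dif_pos hy] at hxy
    exact Subtype.ext_iff.mp (e₃.injective (Fin.ext hxy))
  · intro x hx; simp only [dif_pos hx]; exact (e₃ ⟨x, hx⟩).isLt
  · simp only [dif_pos hv, h3v]; rfl
  · simp only [dif_pos hw, h3w]; rfl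

lemma count_lt {V : Type*} [DecidableEq V] (k : ℕ) (S : Finset V) (hS : S.card = k) (f : V → ℕ)
    (hinj : Set.InjOn f ↑S) (hlt : ∀ x ∈ S, f x < k) (v : V) (hv : v ∈ S) :
    (S.filter (fun x => f x < f v)).card = f v := by
  have himg : S.image f = Finset.range k := by
    apply Finset.eq_of_subset_of_card_le
    · intro m hm
      obtain ⟨x, hx, rfl⟩ := Finset.mem_image.mp hm
      exact Finset.mem_range.mpr (hlt x hx)
    · rw [Finset.card_range, Finset.card_image_of_injOn hinj, hS]
  have h1 : ((S.filter (fun x => f x < f v)).image f).card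
      = (S.filter (fun x => f x < f v)).card :=
    Finset.card_image_of_injOn (hinj.mono (fun x hx => (Finset.mem_filter.mp hx).1))
  have h2 : (S.filter (fun x => f x < f v)).image f = Finset.range (f v) := by
    ext m
    simp only [Finset.mem_image, Finset.mem_filter, Finset.mem_range]
    constructor
    · rintro ⟨x, ⟨_, hx⟩, rfl⟩; exact hx
    · intro h
      have : m ∈ Finset.range k := Finset.mem_range.mpr (lt_trans h (hlt v hv))
      rw [← himg] at this
      obtain ⟨x, hx, rfl⟩ := Finset.mem_image.mp this
      exact ⟨x, ⟨hx, h⟩, rfl⟩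
  rw [← h1, h2, Finset.card_range]


def Pcd (k c d : ℕ) : Prop := 1 ≤ c ∧ ((k-1 < c ∧ d ≤ k-1) ∨ (c = k-1 ∧ d = k-1))

def tch (k c d : ℕ) : ℕ := if d = k-1 then (if c = k-1 then 1 else 0) else if d = 2 then 3 else 2

def dch (k c d : ℕ) : ℕ := if d = k-1 then k-1 else if c = k-1 + tch k c d then k-2 else k-1

lemma step_spec (k c d : ℕ) (hk : 3 ≤ k) (h : Pcd k c d) :
    tch k c d ≤ k-1 ∧ dch k c d ≤ k-1 ∧ tch k c d ≠ d ∧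
    Pcd k (dch k c d + tch k c d) (dch k c d) ∧ dch k c d + tch k c d ≠ c ∧
    ∀ r, r ≤ k-1 → r ≠ d → r ≠ tch k c d → dch k c d + tch k c d ≠ r := by
  refine ⟨?_, ?_, ?_, ?_, ?_, fun r hr hrd hrt => ?_⟩ <;>
    simp only [Pcd, tch, dch] at * <;> split_ifs at * <;> omega

theorem main_aux {V : Type*} [Fintype V] [DecidableEq V] (G : SimpleGraph V)
    (k q : ℕ) (hk : 3 ≤ k) (hq : 0 < q) (B : ℕ → Finset V)
    (hcard : ∀ i, i < q → (B i).card = k)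
    (hclique : ∀ i, i < q → G.IsClique (B i))
    (hcover : ∀ v : V, ∃ i, i < q ∧ v ∈ B i)
    (hedge : ∀ x y, G.Adj x y → ∃ i, i < q ∧ x ∈ B i ∧ y ∈ B i)
    (hconsec : ∀ i, i + 1 < q → (B i ∩ B (i+1)).card = 1)
    (hapart : ∀ i j, j < q → i + 1 < j → B i ∩ B j = ∅)
    (hdist : ∀ i, i + 2 < q → B i ∩ B (i+1) ≠ B (i+1) ∩ B (i+2))
    (u : V) (hu : u ∈ B (q-1)) (hu2 : 2 ≤ q → u ∉ B (q-2))
    (c d : ℕ) (hP : Pcd k c d) :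
    ∃ D : Orient G, (∀ v, D.inDeg v ≤ 2*k-2) ∧ D.CompensatedProper c d u := by
  classical
  -- the shared cut vertices
  have hwex : ∀ i, i + 1 < q → ∃ a, B i ∩ B (i+1) = {a} :=
    fun i hi => Finset.card_eq_one.mp (hconsec i hi)
  have hne : Nonempty V := ⟨u⟩
  choose! w hw using hwex
  have hwmem1 : ∀ i, i + 1 < q → w i ∈ B i := by
    intro i hi
    have : w i ∈ B i ∩ B (i+1) := by rw [hw i hi]; exact Finset.mem_singleton_self _
    exact (Finset.mem_inter.mp this).1
  have hwmem2 : ∀ i, i + 1 < q → w i ∈ B (i+1) := by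
    intro i hi
    have : w i ∈ B i ∩ B (i+1) := by rw [hw i hi]; exact Finset.mem_singleton_self _
    exact (Finset.mem_inter.mp this).2
  -- structural lemmas
  have hmem_w : ∀ v i j, i < j → j < q → v ∈ B i → v ∈ B j → j = i + 1 ∧ v = w i := by
    intro v i j hij hjq hvi hvj
    have hj1 : j = i + 1 := by
      by_contra h
      have hlt : i + 1 < j := by omega
      have := hapart i j hjq hlt
      have hv : v ∈ B i ∩ B j := Finset.mem_inter.mpr ⟨hvi, hvj⟩
      rw [this] at hv
      exact absurd hv (Finset.notMem_empty v)
    subst hj1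
    have hv : v ∈ B i ∩ B (i+1) := Finset.mem_inter.mpr ⟨hvi, hvj⟩
    rw [hw i hjq] at hv
    exact ⟨rfl, Finset.mem_singleton.mp hv⟩
  have huniq : ∀ x y i j, i < q → j < q → x ∈ B i → y ∈ B i → x ∈ B j → y ∈ B j →
      x ≠ y → i = j := by
    have hinter : ∀ i j, i < j → j < q → (B i ∩ B j).card ≤ 1 := by
      intro i j hij hj
      rcases Nat.lt_or_ge (i+1) j with h | h
      · rw [hapart i j hj h]; simp
      · have hj1 : j = i + 1 := by omega
        subst hj1
        rw [hconsec i hj]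
    intro x y i j hi hj hxi hyi hxj hyj hxy
    by_contra hij
    have hsub : ({x, y} : Finset V) ⊆ B i ∩ B j := by
      intro z hz
      rcases Finset.mem_insert.mp hz with rfl | hz
      · exact Finset.mem_inter.mpr ⟨hxi, hxj⟩
      · rw [Finset.mem_singleton.mp hz]
        exact Finset.mem_inter.mpr ⟨hyi, hyj⟩
    have h2 : 2 ≤ (B i ∩ B j).card :=
      le_trans (le_of_eq (Finset.card_pair hxy).symm) (Finset.card_le_card hsub)
    rcases lt_trichotomy i j with h | h | h
    · exact absurd (le_trans h2 (hinter i j h hj)) (by omega)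
    · exact hij h
    · rw [Finset.inter_comm] at h2
      exact absurd (le_trans h2 (hinter j i h hi)) (by omega)
  have hnot3 : ∀ i, i + 2 < q → w i ≠ w (i+1) := by
    intro i hi heq
    apply hdist i hi
    rw [hw i (by omega), hw (i+1) (by omega), heq]
  have hu_only : ∀ i, i < q → i ≠ q - 1 → u ∉ B i := by
    intro i hi hne' hmem
    rcases Nat.lt_or_ge i (q-2) with h | h
    · have hap := hapart i (q-1) (by omega) (by omega)
      have hv : u ∈ B i ∩ B (q-1) := Finset.mem_inter.mpr ⟨hmem, hu⟩
      rw [hap] at hv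
      exact absurd hv (Finset.notMem_empty u)
    · have heq : i = q - 2 := by omega
      exact hu2 (by omega) (heq ▸ hmem)
  have hwne_u : ∀ i, i + 1 < q → w i ≠ u := by
    intro i hi
    have h1 : i < q := by omega
    exact fun h => hu_only i h1 (by omega) (h ▸ hwmem1 i hi)
  -- the arithmetic sequence
  set st : ℕ → ℕ × ℕ := fun n =>
    Nat.rec (c, d) (fun _ p => (dch k p.1 p.2 + tch k p.1 p.2, dch k p.1 p.2)) n with hst
  have hstsucc : ∀ n, st (n+1) = (dch k (st n).1 (st n).2 + tch k (st n).1 (st n).2,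
      dch k (st n).1 (st n).2) := fun n => rfl
  have hPst : ∀ n, Pcd k (st n).1 (st n).2 := by
    intro n
    induction n with
    | zero => exact hP
    | succ n ih => rw [hstsucc]; exact (step_spec k _ _ hk ih).2.2.2.1
  set cc : ℕ → ℕ := fun i => (st (q-1-i)).1 with hcc
  set dd : ℕ → ℕ := fun i => (st (q-1-i)).2 with hdd
  set tt : ℕ → ℕ := fun i => tch k (cc i) (dd i) with htt
  have hPcd : ∀ i, Pcd k (cc i) (dd i) := fun i => hPst _
  have hrel : ∀ i, 1 ≤ i → i ≤ q - 1 →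
      cc (i-1) = dch k (cc i) (dd i) + tt i ∧ dd (i-1) = dch k (cc i) (dd i) := by
    intro i h1 h2
    have h3 : q - 1 - (i-1) = (q - 1 - i) + 1 := by omega
    constructor
    · rw [hcc]; simp only; rw [h3, hstsucc]
    · rw [hdd]; simp only; rw [h3, hstsucc]
  have hccq : cc (q-1) = c := by rw [hcc]; simp only [Nat.sub_self]; rfl
  have hddq : dd (q-1) = d := by rw [hdd]; simp only [Nat.sub_self]; rfl
  have hdd_le : ∀ i, dd i ≤ k - 1 := by
    intro i
    rcases (hPcd i).2 with h | h
    · exact h.2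
    · omega
  have htt_le : ∀ i, tt i ≤ k - 1 := fun i => (step_spec k _ _ hk (hPcd i)).1
  have htt_ne : ∀ i, tt i ≠ dd i := fun i => (step_spec k _ _ hk (hPcd i)).2.2.1
  -- the special vertex of each clique
  set vtx : ℕ → V := fun i => if i = q - 1 then u else w i with hvtx
  have hvtx_mem : ∀ i, i < q → vtx i ∈ B i := by
    intro i hi
    rw [hvtx]; simp only
    split_ifs with h
    · rw [h]; exact hu
    · exact hwmem1 i (by omega)
  have hvtx_ne_w : ∀ i, 1 ≤ i → i < q → vtx i ≠ w (i-1) := by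
    intro i h1 hi
    rw [hvtx]; simp only
    split_ifs with h
    · subst h
      exact (hwne_u (q-1-1) (by omega)).symm
    · have h2 := hnot3 (i-1) (by omega)
      rw [show i-1+1 = i by omega] at h2
      exact h2.symm
  -- the rank functions
  have hρex : ∀ i, ∃ f : V → ℕ, i < q → (Set.InjOn f ↑(B i) ∧ (∀ x ∈ B i, f x < k) ∧
      f (vtx i) = dd i ∧ (1 ≤ i → f (w (i-1)) = tt i)) := by
    intro i
    by_cases hi : i < q
    · by_cases h1 : 1 ≤ i
      · have hwm : w (i-1) ∈ B i := by
          have := hwmem2 (i-1) (by omega)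
          rwa [show i-1+1 = i by omega] at this
        obtain ⟨f, hf1, hf2, hf3, hf4⟩ := rank_exists k (B i) (hcard i hi) (vtx i) (w (i-1))
          (hvtx_mem i hi) hwm (hvtx_ne_w i h1 hi) (dd i) (tt i)
          (by have := hdd_le i; omega) (by have := htt_le i; omega) (Ne.symm (htt_ne i))
        exact ⟨f, fun _ => ⟨hf1, hf2, hf3, fun _ => hf4⟩⟩
      · obtain ⟨y, hy, hyne⟩ := Finset.exists_mem_ne
          (by rw [hcard i hi]; omega) (vtx i)
        obtain ⟨f, hf1, hf2, hf3, _⟩ := rank_exists k (B i) (hcard i hi) (vtx i) y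
          (hvtx_mem i hi) hy (Ne.symm hyne) (dd i) (if dd i = 0 then 1 else 0)
          (by have := hdd_le i; omega) (by split_ifs <;> omega)
          (by split_ifs with h <;> omega)
        exact ⟨f, fun _ => ⟨hf1, hf2, hf3, fun h => absurd h h1⟩⟩
    · exact ⟨fun _ => 0, fun h => absurd h hi⟩
  choose ρ hρ using hρex
  have hρinj : ∀ i, i < q → Set.InjOn (ρ i) ↑(B i) := fun i hi => (hρ i hi).1
  have hρlt : ∀ i, i < q → ∀ x ∈ B i, ρ i x < k := fun i hi => (hρ i hi).2.1
  have hρv : ∀ i, i < q → ρ i (vtx i) = dd i := fun i hi => (hρ i hi).2.2.1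
  have hρw : ∀ i, i < q → 1 ≤ i → ρ i (w (i-1)) = tt i := fun i hi => (hρ i hi).2.2.2
  -- the orientation
  obtain ⟨D, hD⟩ : ∃ D : Orient G, ∀ x y, (D.dir x y = true ↔
      ∃ i, i < q ∧ x ∈ B i ∧ y ∈ B i ∧ ρ i x < ρ i y) := by
    refine ⟨⟨fun x y => decide (∃ i, i < q ∧ x ∈ B i ∧ y ∈ B i ∧ ρ i x < ρ i y), ?_, ?_⟩,
      fun x y => by simp only [decide_eq_true_eq]⟩
    · intro x y h
      rw [decide_eq_true_eq] at h
      obtain ⟨i, hi, hx, hy, hlt⟩ := h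
      have hxy : x ≠ y := fun he => by rw [he] at hlt; exact lt_irrefl _ hlt
      exact hclique i hi (Finset.mem_coe.mpr hx) (Finset.mem_coe.mpr hy) hxy
    · intro x y hadj
      simp only [decide_eq_true_eq]
      constructor
      · rintro ⟨i, hi, hx, hy, hlt⟩ ⟨j, hj, hy2, hx2, hlt2⟩
        have hij := huniq x y i j hi hj hx hy hx2 hy2 hadj.ne
        subst hij
        omega
      · intro hnot
        obtain ⟨i, hi, hx, hy⟩ := hedge x y hadj
        rcases lt_trichotomy (ρ i x) (ρ i y) with h | h | h
        · exact ⟨i, hi, hx, hy, h⟩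
        · exact absurd (hρinj i hi (Finset.mem_coe.mpr hx) (Finset.mem_coe.mpr hy) h) hadj.ne
        · exact absurd ⟨i, hi, hy, hx, h⟩ hnot
  -- indegree computations
  have hdeg_single : ∀ v i, i < q → v ∈ B i → (∀ j, j < q → j ≠ i → v ∉ B j) →
      D.inDeg v = ρ i v := by
    intro v i hi hv honly
    unfold Orient.inDeg
    have he : Finset.univ.filter (fun x => D.dir x v = true)
        = (B i).filter (fun x => ρ i x < ρ i v) := by
      ext x
      simp only [Finset.mem_filter, Finset.mem_univ, true_and, hD]
      constructor
      · rintro ⟨j, hj, hxj, hvj, hlt⟩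
        have hji : j = i := by
          by_contra h
          exact honly j hj h hvj
        subst hji
        exact ⟨hxj, hlt⟩
      · rintro ⟨hx, hlt⟩
        exact ⟨i, hi, hx, hv, hlt⟩
    rw [he]
    exact count_lt k (B i) (hcard i hi) (ρ i) (hρinj i hi) (hρlt i hi) v hv
  have hdeg_w : ∀ i, i + 1 < q → D.inDeg (w i) = cc i ∧ cc i = dd i + tt (i+1) := by
    intro i hi
    have hiq : i < q := by omega
    have hwv : w i = vtx i := by rw [hvtx]; simp only [if_neg (show i ≠ q - 1 by omega)]
    have h1 : ρ i (w i) = dd i := by rw [hwv]; exact hρv i hiq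
    have h2 : ρ (i+1) (w i) = tt (i+1) := by
      have h := hρw (i+1) hi (by omega)
      rwa [show i+1-1 = i by omega] at h
    have hrel' := hrel (i+1) (by omega) (by omega)
    rw [show i+1-1 = i by omega] at hrel'
    have hcceq : cc i = dd i + tt (i+1) := by rw [hrel'.1, hrel'.2]
    refine ⟨?_, hcceq⟩
    have honly : ∀ j, j < q → j ≠ i → j ≠ i+1 → w i ∉ B j := by
      intro j hj hj1 hj2 hmem
      rcases lt_trichotomy j i with h | h | h
      · obtain ⟨hji, heq⟩ := hmem_w (w i) j i h hiq hmem (hwmem1 i hi)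
        have h3 := hnot3 j (by omega)
        rw [← hji] at h3
        exact h3 heq.symm
      · exact hj1 h
      · obtain ⟨hji, heq⟩ := hmem_w (w i) (i+1) j (by omega) hj (hwmem2 i hi) hmem
        exact hnot3 i (by omega) heq
    unfold Orient.inDeg
    have he : Finset.univ.filter (fun x => D.dir x (w i) = true)
        = (B i).filter (fun x => ρ i x < ρ i (w i))
          ∪ (B (i+1)).filter (fun x => ρ (i+1) x < ρ (i+1) (w i)) := by
      ext x
      simp only [Finset.mem_filter, Finset.mem_univ, true_and, Finset.mem_union, hD]
      constructor
      · rintro ⟨j, hj, hxj, hvj, hlt⟩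
        by_cases hji : j = i
        · subst hji; exact Or.inl ⟨hxj, hlt⟩
        · by_cases hji2 : j = i + 1
          · subst hji2; exact Or.inr ⟨hxj, hlt⟩
          · exact absurd hvj (honly j hj hji hji2)
      · rintro (⟨hx, hlt⟩ | ⟨hx, hlt⟩)
        · exact ⟨i, hiq, hx, hwmem1 i hi, hlt⟩
        · exact ⟨i+1, hi, hx, hwmem2 i hi, hlt⟩
    have hdisj : Disjoint ((B i).filter (fun x => ρ i x < ρ i (w i)))
        ((B (i+1)).filter (fun x => ρ (i+1) x < ρ (i+1) (w i))) := by
      rw [Finset.disjoint_left]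
      intro x hx1 hx2
      obtain ⟨hxi, hlt1⟩ := Finset.mem_filter.mp hx1
      obtain ⟨hxi1, _⟩ := Finset.mem_filter.mp hx2
      have hx : x ∈ B i ∩ B (i+1) := Finset.mem_inter.mpr ⟨hxi, hxi1⟩
      rw [hw i hi] at hx
      rw [Finset.mem_singleton.mp hx] at hlt1
      exact lt_irrefl _ hlt1
    rw [he, Finset.card_union_of_disjoint hdisj,
      count_lt k (B i) (hcard i hiq) (ρ i) (hρinj i hiq) (hρlt i hiq) (w i) (hwmem1 i hi),
      count_lt k (B (i+1)) (hcard (i+1) hi) (ρ (i+1)) (hρinj (i+1) hi) (hρlt (i+1) hi)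
        (w i) (hwmem2 i hi), h1, h2, hcceq]
  have hdeg_u : D.inDeg u = d := by
    have h := hdeg_single u (q-1) (by omega) hu (fun j hj hne' => hu_only j hj hne')
    have h2 : ρ (q-1) u = dd (q-1) := by
      have h3 := hρv (q-1) (by omega)
      rw [hvtx] at h3
      simpa using h3
    rw [h, h2, hddq]
  -- colour values
  have hcol : ∀ i x, i < q → x ∈ B i →
      (x = vtx i ∧ (if x = u then c else D.inDeg x) = cc i) ∨
      (1 ≤ i ∧ x = w (i-1) ∧ (if x = u then c else D.inDeg x) = cc (i-1)) ∨
      (x ≠ vtx i ∧ (if x = u then c else D.inDeg x) = ρ i x ∧ ρ i x ≤ k - 1 ∧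
        ρ i x ≠ dd i ∧ (1 ≤ i → ρ i x ≠ tt i)) := by
    intro i x hi hx
    by_cases hxv : x = vtx i
    · left
      refine ⟨hxv, ?_⟩
      by_cases hlast : i = q - 1
      · have hxu : x = u := by rw [hxv, hvtx]; simp [hlast]
        rw [if_pos hxu, hlast, hccq]
      · have hxw : x = w i := by rw [hxv, hvtx]; simp [hlast]
        have hiq1 : i + 1 < q := by omega
        have hxu : x ≠ u := by rw [hxw]; exact hwne_u i hiq1
        rw [if_neg hxu, hxw]
        exact (hdeg_w i hiq1).1
    · by_cases hxw : 1 ≤ i ∧ x = w (i-1)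
      · obtain ⟨h1, hxw⟩ := hxw
        right; left
        have hi1 : (i-1) + 1 < q := by omega
        have hxu : x ≠ u := by rw [hxw]; exact hwne_u (i-1) hi1
        refine ⟨h1, hxw, ?_⟩
        rw [if_neg hxu, hxw]
        exact (hdeg_w (i-1) hi1).1
      · right; right
        have hxw' : 1 ≤ i → x ≠ w (i-1) := fun h1 he => hxw ⟨h1, he⟩
        have hxu : x ≠ u := by
          intro he
          subst he
          by_cases hlast : i = q - 1
          · exact hxv (by rw [hvtx]; simp [hlast])
          · exact hu_only i hi hlast hx
        have honly : ∀ j, j < q → j ≠ i → x ∉ B j := by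
          intro j hj hji hmem
          rcases lt_trichotomy j i with h | h | h
          · obtain ⟨hji', heq⟩ := hmem_w x j i h hi hmem hx
            refine hxw' (by omega) ?_
            rw [heq]
            congr 1
            omega
          · exact hji h
          · obtain ⟨hji', heq⟩ := hmem_w x i j h hj hx hmem
            have hlast : i ≠ q - 1 := by omega
            exact hxv (by rw [heq, hvtx]; simp [hlast])
        have hdeg := hdeg_single x i hi hx honly
        refine ⟨hxv, by rw [if_neg hxu]; exact hdeg,
          by have := hρlt i hi x hx; omega, ?_, ?_⟩
        · intro he
          refine hxv (hρinj i hi (Finset.mem_coe.mpr hx)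
            (Finset.mem_coe.mpr (hvtx_mem i hi)) ?_)
          rw [he, hρv i hi]
        · intro h1 he
          have hwm : w (i-1) ∈ B i := by
            have := hwmem2 (i-1) (by omega)
            rwa [show i-1+1 = i by omega] at this
          refine hxw' h1 (hρinj i hi (Finset.mem_coe.mpr hx) (Finset.mem_coe.mpr hwm) ?_)
          rw [he, hρw i hi h1]
  have hclass : ∀ v : V, (∃ i, i+1 < q ∧ v = w i)
      ∨ (∃ i, i < q ∧ v ∈ B i ∧ ∀ j, j < q → j ≠ i → v ∉ B j) := by
    intro v
    obtain ⟨i, hi, hvi⟩ := hcover v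
    by_cases hex : ∃ j, j < q ∧ j ≠ i ∧ v ∈ B j
    · obtain ⟨j, hj, hji, hvj⟩ := hex
      left
      rcases lt_trichotomy j i with h | h | h
      · obtain ⟨h', rfl⟩ := hmem_w v j i h hi hvj hvi
        exact ⟨j, by omega, rfl⟩
      · exact absurd h hji
      · obtain ⟨h', rfl⟩ := hmem_w v i j h hj hvi hvj
        exact ⟨i, by omega, rfl⟩
    · push_neg at hex
      right
      exact ⟨i, hi, hvi, fun j hj hji => hex j hj hji⟩
  refine ⟨D, ?_, hdeg_u, ?_⟩
  · -- degree bound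
    intro v
    rcases hclass v with ⟨i, hi, rfl⟩ | ⟨i, hi, hv, honly⟩
    · rw [(hdeg_w i hi).1, (hdeg_w i hi).2]
      have := hdd_le i
      have := htt_le (i+1)
      omega
    · rw [hdeg_single v i hi hv honly]
      have := hρlt i hi v hv
      omega
  · -- properness
    intro x y hadj
    obtain ⟨i, hi, hx, hy⟩ := hedge x y hadj
    have hxy : x ≠ y := hadj.ne
    have hccne : 1 ≤ i → cc (i-1) ≠ cc i ∧
        ∀ r, r ≤ k-1 → r ≠ dd i → r ≠ tt i → cc (i-1) ≠ r := by
      intro h1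
      have hrel' := hrel i h1 (by omega)
      have hs := step_spec k (cc i) (dd i) hk (hPcd i)
      constructor
      · rw [hrel'.1, htt]
        exact hs.2.2.2.2.1
      · intro r hr h1' h2'
        rw [hrel'.1, htt]
        refine hs.2.2.2.2.2 r hr h1' ?_
        rw [htt] at h2'
        exact h2'
    have hcci_ne_r : ∀ r, r ≤ k-1 → r ≠ dd i → cc i ≠ r := by
      intro r hr hrd
      rcases (hPcd i).2 with h | h
      · omega
      · omega
    rcases hcol i x hi hx with ⟨hxv, hcx⟩ | ⟨h1x, hxw, hcx⟩ | ⟨hxv, hcx, hxr1, hxr2, hxr3⟩ <;>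
      rcases hcol i y hi hy with ⟨hyv, hcy⟩ | ⟨h1y, hyw, hcy⟩ | ⟨hyv, hcy, hyr1, hyr2, hyr3⟩
    · exact absurd (hxv.trans hyv.symm) hxy
    · rw [hcx, hcy]; exact ((hccne h1y).1).symm
    · rw [hcx, hcy]; exact hcci_ne_r _ hyr1 hyr2
    · rw [hcx, hcy]; exact (hccne h1x).1
    · exact absurd (hxw.trans hyw.symm) hxy
    · rw [hcx, hcy]; exact (hccne h1x).2 _ hyr1 hyr2 (hyr3 h1x)
    · rw [hcx, hcy]; exact (hcci_ne_r _ hxr1 hxr2).symm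
    · rw [hcx, hcy]; exact ((hccne h1y).2 _ hxr1 hxr2 (hxr3 h1y)).symm
    · rw [hcx, hcy]
      intro he
      exact hxy (hρinj i hi (Finset.mem_coe.mpr hx) (Finset.mem_coe.mpr hy) he)


/-- For `k ≥ 3`, a `k`-uniform path block graph `G` with clique sequence `C1, …, Cq`,
a non-cut-vertex `u` of the last clique, and integers `c ≥ 1`, `d ≥ 0` with either
`c > k - 1 ≥ d` or `c = d = k - 1`, there is a proper `max c (2k-2)`-orientation of `G`
compensated by `(c, d, u)`. -/
theorem pathBlockGraph_compensated_orientation {V : Type*} [Fintype V] [DecidableEq V]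
    (G : SimpleGraph V) (k : ℕ) (hk : 3 ≤ k) {q : ℕ} (hq : 0 < q)
    (C : Fin q → Finset V) (hC : IsPathBlockSeq G k C)
    (u : V) (hu : u ∈ C ⟨q - 1, by omega⟩) (hcut : ¬ IsCutVertex G u)
    (c d : ℕ) (hc : 1 ≤ c)
    (hcd : (k - 1 < c ∧ d ≤ k - 1) ∨ (c = k - 1 ∧ d = k - 1)) :
    ∃ D : Orient G, (∀ v, D.inDeg v ≤ max c (2 * k - 2)) ∧
      D.CompensatedProper c d u := by
  classical
  have hqlast : q - 1 < q := by omega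
  -- u is not in the second-to-last clique, else it would be a cut vertex
  have hu2 : ∀ h2 : 2 ≤ q, u ∉ C ⟨q-2, by omega⟩ := by
    intro hq2 hmem
    apply hcut
    have hq2lt : q - 2 < q := by omega
    set s : Set V := {x | x ≠ u} with hs
    -- the intersection of the last two cliques is {u}
    have hinter : C ⟨q-2, hq2lt⟩ ∩ C ⟨q-1, hqlast⟩ = {u} := by
      have hcard := hC.consec ⟨q-2, hq2lt⟩ ⟨q-1, hqlast⟩ (by show q-1 = q-2+1; omega)
      obtain ⟨z, hz⟩ := Finset.card_eq_one.mp hcard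
      have hu' : u ∈ C ⟨q-2, hq2lt⟩ ∩ C ⟨q-1, hqlast⟩ := Finset.mem_inter.mpr ⟨hmem, hu⟩
      rw [hz] at hu' ⊢
      rw [Finset.mem_singleton.mp hu']
    -- neighbours of non-u vertices of the last clique stay in the last clique
    have hstep : ∀ a b : V, a ≠ u → G.Adj a b →
        a ∈ C ⟨q-1, hqlast⟩ → b ∈ C ⟨q-1, hqlast⟩ := by
      intro a b hau hadj ha
      obtain ⟨j, haj, hbj⟩ := hC.edge_mem a b hadj
      by_cases hj : j = ⟨q-1, hqlast⟩
      · subst hj; exact hbj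
      · exfalso
        have hjv : (j : ℕ) ≠ q - 1 := fun h => hj (Fin.ext h)
        rcases Nat.lt_or_ge (j : ℕ) (q-2) with h | h
        · have hap := hC.apart j ⟨q-1, hqlast⟩ (by show (j:ℕ)+1 < q-1; omega)
          have hmem2 : a ∈ C j ∩ C ⟨q-1, hqlast⟩ := Finset.mem_inter.mpr ⟨haj, ha⟩
          rw [hap] at hmem2
          exact Finset.notMem_empty a hmem2
        · have hjq2 : j = ⟨q-2, hq2lt⟩ := Fin.ext (by simp only; omega)
          subst hjq2
          have ha' : a ∈ C ⟨q-2, hq2lt⟩ ∩ C ⟨q-1, hqlast⟩ := Finset.mem_inter.mpr ⟨haj, ha⟩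
          rw [hinter] at ha'
          exact hau (Finset.mem_singleton.mp ha')
    have hreach : ∀ a b : s, (G.induce s).Reachable a b →
        (a : V) ∈ C ⟨q-1, hqlast⟩ → (b : V) ∈ C ⟨q-1, hqlast⟩ := by
      intro a b hr
      obtain ⟨W⟩ := hr
      induction W with
      | nil => exact id
      | @cons a' b' c' h p ih =>
        intro ha
        exact ih (hstep a'.1 b'.1 a'.2 (by simpa using h) ha)
    -- two vertices separated by removing u
    obtain ⟨x, hx, hxu⟩ := Finset.exists_mem_ne
      (by rw [hC.card_eq ⟨q-1, hqlast⟩]; omega) u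
    obtain ⟨y, hy, hyu⟩ := Finset.exists_mem_ne
      (by rw [hC.card_eq ⟨q-2, hq2lt⟩]; omega) u
    have hynot : y ∉ C ⟨q-1, hqlast⟩ := by
      intro hy2
      have : y ∈ C ⟨q-2, hq2lt⟩ ∩ C ⟨q-1, hqlast⟩ := Finset.mem_inter.mpr ⟨hy, hy2⟩
      rw [hinter] at this
      exact hyu (Finset.mem_singleton.mp this)
    have hxadj : G.Adj x u := hC.clique ⟨q-1, hqlast⟩ (Finset.mem_coe.mpr hx)
      (Finset.mem_coe.mpr hu) hxu
    have hyadj : G.Adj u y := hC.clique ⟨q-2, hq2lt⟩ (Finset.mem_coe.mpr hmem)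
      (Finset.mem_coe.mpr hy) (Ne.symm hyu)
    set φ : G.induce s →g G := (SimpleGraph.Embedding.induce s).toHom with hφ
    have hsurj : Function.Surjective (ConnectedComponent.map φ) := by
      intro comp
      induction comp using ConnectedComponent.ind with
      | _ v =>
        by_cases hv : v = u
        · refine ⟨(G.induce s).connectedComponentMk ⟨x, hxu⟩, ?_⟩
          rw [ConnectedComponent.map_mk]
          subst hv
          exact ConnectedComponent.sound hxadj.reachable
        · refine ⟨(G.induce s).connectedComponentMk ⟨v, hv⟩, ?_⟩
          rw [ConnectedComponent.map_mk]
          rfl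
    have hninj : ¬ Function.Injective (ConnectedComponent.map φ) := by
      intro hinj
      have heq : ConnectedComponent.map φ ((G.induce s).connectedComponentMk ⟨x, hxu⟩)
          = ConnectedComponent.map φ ((G.induce s).connectedComponentMk ⟨y, hyu⟩) := by
        rw [ConnectedComponent.map_mk, ConnectedComponent.map_mk]
        exact ConnectedComponent.sound (hxadj.reachable.trans hyadj.reachable)
      have h2 := hinj heq
      rw [ConnectedComponent.eq] at h2
      exact hynot (hreach _ _ h2 hx)
    haveI : Fintype G.ConnectedComponent := Fintype.ofFinite _
    haveI : Fintype (G.induce s).ConnectedComponent := Fintype.ofFinite _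
    show Nat.card (G.induce s).ConnectedComponent > Nat.card G.ConnectedComponent
    rw [Nat.card_eq_fintype_card, Nat.card_eq_fintype_card]
    exact Fintype.card_lt_of_surjective_not_injective _ hsurj hninj
  -- apply the main construction
  set B : ℕ → Finset V := fun i => if h : i < q then C ⟨i, h⟩ else ∅ with hB
  have hBeq : ∀ i (h : i < q), B i = C ⟨i, h⟩ := fun i h => dif_pos h
  obtain ⟨D, h1, h2⟩ := main_aux G k q hk hq B
    (fun i hi => by rw [hBeq i hi]; exact hC.card_eq _)
    (fun i hi => by rw [hBeq i hi]; exact hC.clique _)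
    (fun v => by
      obtain ⟨i, hi⟩ := hC.cover v
      exact ⟨i, i.isLt, by rw [hBeq i.1 i.isLt, Fin.eta]; exact hi⟩)
    (fun a b hab => by
      obtain ⟨i, hi1, hi2⟩ := hC.edge_mem a b hab
      exact ⟨i, i.isLt, by rw [hBeq i.1 i.isLt, Fin.eta]; exact hi1,
        by rw [hBeq i.1 i.isLt, Fin.eta]; exact hi2⟩)
    (fun i hi => by
      rw [hBeq i (by omega), hBeq (i+1) hi]
      exact hC.consec ⟨i, by omega⟩ ⟨i+1, hi⟩ rfl)
    (fun i j hj hij => by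
      by_cases hiq : i < q
      · rw [hBeq i hiq, hBeq j hj]
        exact hC.apart ⟨i, hiq⟩ ⟨j, hj⟩ hij
      · rw [hB]; simp only [dif_neg hiq, Finset.empty_inter])
    (fun i hi => by
      rw [hBeq i (by omega), hBeq (i+1) (by omega), hBeq (i+2) hi]
      exact hC.cut_distinct ⟨i, by omega⟩ ⟨i+1, by omega⟩ ⟨i+2, hi⟩ rfl rfl)
    u (by rw [hBeq (q-1) hqlast]; exact hu)
    (fun h2 => by rw [hBeq (q-2) (by omega)]; exact hu2 h2)
    c d ⟨hc, hcd⟩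
  exact ⟨D, fun v => le_trans (h1 v) (le_max_right _ _), h2⟩
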